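/- Let $\beta > 0$, $h > 0$, and let $q \in (0,1)$ satisfy $q = \mathbb{E}[\tanh^2(\beta\sqrt{q}Z + h)]$ for $Z$ standard Gaussian. If $\beta^2(1-q) > 1$, then $h < \beta^2 q$. -/

import Mathlib

open MeasureTheory ProbabilityTheory Real Filter
open scoped NNReal ENNReal

namespace SK12Aux

noncomputable def ψ (m : ℝ) : ℝ → ℝ := gaussianPDFReal m 1

lemma ψ_def (m x : ℝ) : ψ m x = (Real.sqrt (2*π))⁻¹ * Real.exp (-(x-m)^2/2) := by
  simp [ψ, gaussianPDFReal]

lemma ψ_nonneg (m x : ℝ) : 0 ≤ ψ m x := gaussianPDFReal_nonneg _ _ _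
lemma ψ_integrable (m : ℝ) : Integrable (ψ m) := integrable_gaussianPDFReal _ _
lemma ψ_integral (m : ℝ) : ∫ x, ψ m x = 1 := integral_gaussianPDFReal_eq_one m one_ne_zero

lemma γ_density (m : ℝ) (g : ℝ → ℝ) :
    ∫ x, g x ∂(gaussianReal m 1) = ∫ x, g x * ψ m x := by
  rw [gaussianReal_of_var_ne_zero m one_ne_zero]
  have hmeq : gaussianPDF m 1 = fun x => ((Real.toNNReal (gaussianPDFReal m 1 x) : ℝ≥0) : ℝ≥0∞) := rfl
  rw [hmeq, integral_withDensity_eq_integral_smul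
    ((measurable_gaussianPDFReal m 1).real_toNNReal) g]
  congr 1 with x
  rw [NNReal.smul_def, Real.coe_toNNReal _ (gaussianPDFReal_nonneg _ _ _)]
  exact mul_comm _ _

lemma shift_int (c : ℝ) (g : ℝ → ℝ) (hg : Measurable g) :
    ∫ z, g (z + c) ∂(gaussianReal 0 1) = ∫ t, g t * ψ c t := by
  have hmap := gaussianReal_map_add_const (μ := 0) (v := 1) c
  have : ∫ t, g t ∂((gaussianReal 0 1).map (· + c)) = ∫ z, g (z + c) ∂(gaussianReal 0 1) :=
    integral_map (measurable_add_const c).aemeasurable hg.aestronglyMeasurable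
  rw [← this, hmap, zero_add, γ_density]

lemma exp_arg (x : ℝ) : -(1/2 : ℝ) * x^2 = -x^2/2 := by ring

lemma integrable_xn_exp (n : ℕ) : Integrable (fun x : ℝ => x ^ n * Real.exp (-x^2/2)) := by
  have base := integrable_rpow_mul_exp_neg_mul_sq (b := (1:ℝ)/2) (by norm_num) (s := (n:ℝ))
    ((by norm_num : (-1:ℝ) < 0).trans_le (Nat.cast_nonneg n))
  simp only [Real.rpow_natCast, exp_arg] at base
  exact base

lemma tendsto_x_exp : Tendsto (fun x : ℝ => x * Real.exp (-x^2/2)) atTop (nhds 0) := by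
  have o := rpow_mul_exp_neg_mul_sq_isLittleO_exp_neg (b := (1:ℝ)/2) (by norm_num) 1
  simp only [Real.rpow_one, exp_arg] at o
  refine o.trans_tendsto ?_
  exact Real.tendsto_exp_atBot.comp (tendsto_id.const_mul_atTop_of_neg (by norm_num))

lemma int_sq_exp : ∫ x : ℝ, x^2 * Real.exp (-x^2/2) = Real.sqrt (2*π) := by
  set f : ℝ → ℝ := fun x => -x * Real.exp (-x^2/2) with hf
  have hderiv : ∀ x : ℝ, HasDerivAt f ((x^2 - 1) * Real.exp (-x^2/2)) x := by
    intro x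
    have h1 : HasDerivAt (fun x : ℝ => -x^2/2) (-x) x := by
      have : HasDerivAt (fun y : ℝ => -(y^2/2)) (-(((2:ℕ):ℝ) * x^(2-1) / 2)) x := ((hasDerivAt_pow 2 x).div_const 2).neg
      convert this using 1
      · ext y; ring
      · push_cast; ring
    have h2 := h1.exp
    have h3 : HasDerivAt (fun y : ℝ => -y * Real.exp (-y^2/2)) (-1 * Real.exp (-x^2/2) + -x * (Real.exp (-x^2/2) * -x)) x := ((hasDerivAt_id x).neg).mul h2
    convert h3 using 1
    ring
  have hint : Integrable (fun x : ℝ => (x^2 - 1) * Real.exp (-x^2/2)) := by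
    have := (integrable_xn_exp 2).sub (integrable_xn_exp 0)
    refine this.congr (Filter.Eventually.of_forall fun x => ?_)
    simp; ring
  have hTop : Tendsto f atTop (nhds 0) := by
    have := tendsto_x_exp.neg
    simp only [neg_zero] at this
    refine this.congr fun x => by simp only [hf]; ring
  have hBot : Tendsto f atBot (nhds 0) := by
    have := tendsto_x_exp.comp tendsto_neg_atBot_atTop
    refine this.congr fun x => ?_
    simp only [Function.comp, hf, neg_neg]
    ring_nf
  have hIoi : ∫ x in Set.Ioi (0:ℝ), (x^2 - 1) * Real.exp (-x^2/2) = 0 - f 0 :=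
    integral_Ioi_of_hasDerivAt_of_tendsto' (fun x _ => hderiv x) hint.integrableOn hTop
  have hIic : ∫ x in Set.Iic (0:ℝ), (x^2 - 1) * Real.exp (-x^2/2) = f 0 - 0 :=
    integral_Iic_of_hasDerivAt_of_tendsto' (fun x _ => hderiv x) hint.integrableOn hBot
  have htot : ∫ x : ℝ, (x^2 - 1) * Real.exp (-x^2/2) = 0 := by
    rw [← intervalIntegral.integral_Iic_add_Ioi (b := (0:ℝ)) hint.integrableOn hint.integrableOn,
      hIoi, hIic]
    ring
  have hgauss : ∫ x : ℝ, Real.exp (-x^2/2) = Real.sqrt (2*π) := by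
    have := integral_gaussian (1/2)
    simp only [exp_arg] at this
    rw [this]
    congr 1
    field_simp
  have hsplit : ∫ x : ℝ, (x^2 - 1) * Real.exp (-x^2/2)
      = (∫ x : ℝ, x^2 * Real.exp (-x^2/2)) - ∫ x : ℝ, Real.exp (-x^2/2) := by
    rw [← integral_sub (integrable_xn_exp 2) (by simpa using integrable_xn_exp 0)]
    congr 1 with x
    ring
  rw [hsplit] at htot
  linarith [htot, hgauss]

lemma sqrt2pi_pos : 0 < Real.sqrt (2*π) := Real.sqrt_pos.2 (by positivity)

lemma integrable_xn_psi (m : ℝ) (n : ℕ) : Integrable (fun x : ℝ => x ^ n * ψ m x) := by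
  have h : ∀ k : ℕ, Integrable (fun x : ℝ => x ^ k * ψ 0 x) := by
    intro k
    have := (integrable_xn_exp k).const_mul ((Real.sqrt (2*π))⁻¹)
    refine this.congr (Filter.Eventually.of_forall fun x => ?_)
    simp only [ψ_def, sub_zero]
    ring
  have key : Integrable (fun x : ℝ => (x + m) ^ n * ψ 0 x) := by
    have : (fun x : ℝ => (x + m) ^ n * ψ 0 x)
        = fun x => ∑ k ∈ Finset.range (n+1), (m ^ (n - k) * (n.choose k)) * (x ^ k * ψ 0 x) := by
      funext x
      rw [add_pow, Finset.sum_mul]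
      congr 1 with k
      ring
    rw [this]
    exact integrable_finset_sum _ fun k _ => ((h k).const_mul _)
  have := key.comp_sub_right m
  refine this.congr (Filter.Eventually.of_forall fun x => ?_)
  simp only [sub_add_cancel]
  congr 1
  rw [ψ_def, ψ_def]
  norm_num

lemma psi_shift (m x : ℝ) : ψ m (x + m) = ψ 0 x := by
  rw [ψ_def, ψ_def]; norm_num

lemma int_x_psi (m : ℝ) : ∫ x, x * ψ m x = m := by
  have h0 : ∫ x, x * ψ 0 x = 0 := by
    have hrefl := integral_neg_eq_self (fun x : ℝ => x * ψ 0 x) volume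
    have : (fun x : ℝ => -x * ψ 0 (-x)) = fun x => -(x * ψ 0 x) := by
      funext x; rw [ψ_def, ψ_def]; ring_nf
    rw [this, integral_neg] at hrefl
    linarith
  have hshift := integral_add_right_eq_self (μ := volume) (fun x : ℝ => x * ψ m x) m
  rw [← hshift]
  have : (fun x : ℝ => (x + m) * ψ m (x + m)) = fun x => x * ψ 0 x + m * ψ 0 x := by
    funext x; rw [psi_shift]; ring
  have i1 : Integrable (fun x : ℝ => x * ψ 0 x) := by simpa using integrable_xn_psi 0 1
  rw [this, integral_add i1 ((ψ_integrable 0).const_mul m), h0, integral_const_mul, ψ_integral]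
  ring

lemma int_x2_psi (m : ℝ) : ∫ x, x^2 * ψ m x = 1 + m^2 := by
  have h0 : ∫ x, x^2 * ψ 0 x = 1 := by
    have : (fun x : ℝ => x^2 * ψ 0 x)
        = fun x => (Real.sqrt (2*π))⁻¹ * (x^2 * Real.exp (-x^2/2)) := by
      funext x; simp only [ψ_def, sub_zero]; ring
    rw [this, integral_const_mul, int_sq_exp, inv_mul_cancel₀ sqrt2pi_pos.ne']
  have hshift := integral_add_right_eq_self (μ := volume) (fun x : ℝ => x^2 * ψ m x) m
  rw [← hshift]
  have : (fun x : ℝ => (x + m)^2 * ψ m (x + m))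
      = fun x => x^2 * ψ 0 x + (2*m) * (x * ψ 0 x) + m^2 * ψ 0 x := by
    funext x; rw [psi_shift]; ring
  have h1 : ∫ x, x * ψ 0 x = 0 := by
    have := int_x_psi 0; simpa using this
  have i1 : Integrable (fun x : ℝ => x * ψ 0 x) := by simpa using integrable_xn_psi 0 1
  have i2 : Integrable (fun x : ℝ => x^2 * ψ 0 x) := by simpa using integrable_xn_psi 0 2
  have i12 : Integrable (fun x : ℝ => x^2 * ψ 0 x + 2*m*(x*ψ 0 x)) := i2.add (i1.const_mul (2*m))
  rw [this, integral_add i12 ((ψ_integrable 0).const_mul (m^2)),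
    integral_add i2 (i1.const_mul (2*m)),
    h0, integral_const_mul, integral_const_mul, h1, ψ_integral]
  ring

lemma tanh_psi_identity (σ t : ℝ) :
    Real.tanh (σ*t) * (ψ σ t + ψ (-σ) t) = ψ σ t - ψ (-σ) t := by
  rw [ψ_def, ψ_def]
  have h1 : -(t - σ)^2/2 = -(t+σ)^2/2 + (σ*t + σ*t) := by ring
  have h2 : Real.exp (-(t-σ)^2/2) = Real.exp (-(t+σ)^2/2) * (Real.exp (σ*t) * Real.exp (σ*t)) := by
    rw [← Real.exp_add, ← Real.exp_add, ← h1]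
  have h3 : t - -σ = t + σ := by ring
  rw [h3, h2, Real.tanh_eq_sinh_div_cosh, Real.sinh_eq, Real.cosh_eq]
  have hc : Real.exp (σ*t) + Real.exp (-(σ*t)) ≠ 0 := by positivity
  have he : Real.exp (σ*t) ≠ 0 := Real.exp_ne_zero _
  field_simp
  ring_nf
  simp only [← Real.exp_nat_mul, ← Real.exp_add]
  ring_nf

lemma continuous_tanh' : Continuous Real.tanh := by
  have : Real.tanh = fun x => Real.sinh x / Real.cosh x :=
    funext fun x => Real.tanh_eq_sinh_div_cosh x
  rw [this]
  exact Real.continuous_sinh.div Real.continuous_cosh fun x => (Real.cosh_pos x).ne'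

lemma tanh_abs_le_one (x : ℝ) : |Real.tanh x| ≤ 1 := by
  have hc := Real.cosh_pos x
  have hs := Real.cosh_sq_sub_sinh_sq x
  rw [Real.tanh_eq_sinh_div_cosh, abs_div, abs_of_pos hc, div_le_one hc]
  nlinarith [abs_nonneg (Real.sinh x), sq_abs (Real.sinh x)]

lemma meas_tanh_sq (σ : ℝ) : Measurable fun t : ℝ => Real.tanh (σ*t)^2 :=
  ((continuous_tanh'.comp (continuous_const.mul continuous_id)).pow 2).measurable

lemma tanh_sq_bound (σ : ℝ) : ∀ t : ℝ, ‖Real.tanh (σ*t)^2‖ ≤ 1 := by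
  intro t
  rw [norm_eq_abs, abs_pow]
  calc |Real.tanh (σ*t)|^2 ≤ 1^2 := pow_le_pow_left₀ (abs_nonneg _) (tanh_abs_le_one _) 2
    _ = 1 := one_pow 2

lemma lowerT {σ : ℝ} (hσ : 0 < σ) :
    σ^2/(1+σ^2) ≤ ∫ t, Real.tanh (σ*t)^2 * ψ σ t := by
  set l : ℝ := σ/(1+σ^2) with hl
  set T : ℝ := ∫ t, Real.tanh (σ*t)^2 * ψ σ t with hT
  have h1σ : (0:ℝ) < 1 + σ^2 := by positivity
  have iψ : Integrable (fun t => ψ σ t + ψ (-σ) t) := (ψ_integrable σ).add (ψ_integrable (-σ))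
  have itψ : Integrable (fun t : ℝ => t * (ψ σ t + ψ (-σ) t)) := by
    have h1 : Integrable (fun t : ℝ => t * ψ σ t) := by simpa using integrable_xn_psi σ 1
    have h2 : Integrable (fun t : ℝ => t * ψ (-σ) t) := by simpa using integrable_xn_psi (-σ) 1
    refine (h1.add h2).congr (Filter.Eventually.of_forall fun t => ?_)
    simp only [Pi.add_apply]; ring
  have it2ψ : Integrable (fun t : ℝ => t^2 * (ψ σ t + ψ (-σ) t)) := by
    have h1 : Integrable (fun t : ℝ => t^2 * ψ σ t) := by simpa using integrable_xn_psi σ 2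
    have h2 : Integrable (fun t : ℝ => t^2 * ψ (-σ) t) := by simpa using integrable_xn_psi (-σ) 2
    refine (h1.add h2).congr (Filter.Eventually.of_forall fun t => ?_)
    simp only [Pi.add_apply]; ring
  have iP1 : Integrable (fun t : ℝ => Real.tanh (σ*t)^2 * (ψ σ t + ψ (-σ) t)) :=
    iψ.bdd_mul (meas_tanh_sq σ).aestronglyMeasurable (Filter.Eventually.of_forall (tanh_sq_bound σ))
  have iP2 : Integrable (fun t : ℝ => Real.tanh (σ*t) * (t * (ψ σ t + ψ (-σ) t))) :=
    itψ.bdd_mul ((continuous_tanh'.comp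
      (continuous_const.mul continuous_id)).measurable).aestronglyMeasurable
      (Filter.Eventually.of_forall fun t => by rw [norm_eq_abs]; exact tanh_abs_le_one _)
  have mA : ∫ t, Real.tanh (σ*t)^2 * (ψ σ t + ψ (-σ) t) = 2*T := by
    have hrefl := integral_neg_eq_self (fun t : ℝ => Real.tanh (σ*t)^2 * ψ σ t) volume
    have heq : (fun t : ℝ => Real.tanh (σ*(-t))^2 * ψ σ (-t))
        = fun t => Real.tanh (σ*t)^2 * ψ (-σ) t := by
      funext t
      rw [ψ_def, ψ_def]
      have ha : σ * -t = -(σ*t) := by ring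
      rw [ha, Real.tanh_neg]
      have hb : (-t - σ)^2 = (t - -σ)^2 := by ring
      rw [hb]
      ring
    rw [heq] at hrefl
    have hsplit : ∫ t, Real.tanh (σ*t)^2 * (ψ σ t + ψ (-σ) t)
        = (∫ t, Real.tanh (σ*t)^2 * ψ σ t) + ∫ t, Real.tanh (σ*t)^2 * ψ (-σ) t := by
      rw [← integral_add
        ((ψ_integrable σ).bdd_mul (meas_tanh_sq σ).aestronglyMeasurable (Filter.Eventually.of_forall (tanh_sq_bound σ)))
        ((ψ_integrable (-σ)).bdd_mul (meas_tanh_sq σ).aestronglyMeasurable (Filter.Eventually.of_forall (tanh_sq_bound σ)))]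
      congr 1 with t; ring
    rw [hsplit, hrefl]
    ring
  have mB : ∫ t, Real.tanh (σ*t) * (t * (ψ σ t + ψ (-σ) t)) = 2*σ := by
    have heq : (fun t : ℝ => Real.tanh (σ*t) * (t * (ψ σ t + ψ (-σ) t)))
        = fun t => t * ψ σ t - t * ψ (-σ) t := by
      funext t
      have h := tanh_psi_identity σ t
      have h2 : Real.tanh (σ*t) * (t * (ψ σ t + ψ (-σ) t))
          = t * (Real.tanh (σ*t) * (ψ σ t + ψ (-σ) t)) := by ring
      rw [h2, h]
      ring
    rw [heq, integral_sub (by simpa using integrable_xn_psi σ 1)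
      (by simpa using integrable_xn_psi (-σ) 1), int_x_psi, int_x_psi]
    ring
  have mC : ∫ t, t^2 * (ψ σ t + ψ (-σ) t) = 2*(1+σ^2) := by
    have hsplit : ∫ t, t^2 * (ψ σ t + ψ (-σ) t)
        = (∫ t, t^2 * ψ σ t) + ∫ t, t^2 * ψ (-σ) t := by
      rw [← integral_add (by simpa using integrable_xn_psi σ 2)
        (by simpa using integrable_xn_psi (-σ) 2)]
      congr 1 with t; ring
    rw [hsplit, int_x2_psi, int_x2_psi]
    ring
  have hnn : 0 ≤ ∫ t, (Real.tanh (σ*t) - l*t)^2 * (ψ σ t + ψ (-σ) t) :=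
    integral_nonneg fun t => mul_nonneg (sq_nonneg _)
      (add_nonneg (ψ_nonneg _ _) (ψ_nonneg _ _))
  have hexp : ∫ t, (Real.tanh (σ*t) - l*t)^2 * (ψ σ t + ψ (-σ) t)
      = 2*T - 2*l*(2*σ) + l^2*(2*(1+σ^2)) := by
    have heq : (fun t : ℝ => (Real.tanh (σ*t) - l*t)^2 * (ψ σ t + ψ (-σ) t))
        = fun t => (Real.tanh (σ*t)^2 * (ψ σ t + ψ (-σ) t)
            - (2*l) * (Real.tanh (σ*t) * (t * (ψ σ t + ψ (-σ) t))))
            + l^2 * (t^2 * (ψ σ t + ψ (-σ) t)) := by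
      funext t; ring
    have iP12 : Integrable (fun t : ℝ => Real.tanh (σ*t)^2 * (ψ σ t + ψ (-σ) t)
        - (2*l) * (Real.tanh (σ*t) * (t * (ψ σ t + ψ (-σ) t)))) := iP1.sub (iP2.const_mul (2*l))
    rw [heq, integral_add iP12 (it2ψ.const_mul (l^2)),
      integral_sub iP1 (iP2.const_mul (2*l)), integral_const_mul, integral_const_mul,
      mA, mB, mC]
  rw [hexp] at hnn
  rw [hl] at hnn
  have : σ^2/(1+σ^2) = 2*(σ/(1+σ^2))*(2*σ) / 2 - (σ/(1+σ^2))^2*(2*(1+σ^2)) / 2 := by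
    field_simp
    ring
  rw [this]
  linarith

lemma one_sub_tanh_sq (x : ℝ) : 1 - Real.tanh x ^ 2 = (Real.cosh x ^ 2)⁻¹ := by
  have hc := Real.cosh_pos x
  have hs := Real.cosh_sq_sub_sinh_sq x
  rw [Real.tanh_eq_sinh_div_cosh]
  field_simp
  linarith

lemma S_mono {σ u v : ℝ} (h : |u| ≤ |v|) :
    1 - Real.tanh (σ*v) ^ 2 ≤ 1 - Real.tanh (σ*u) ^ 2 := by
  rw [one_sub_tanh_sq, one_sub_tanh_sq]
  have h1 : Real.cosh (σ*u) ≤ Real.cosh (σ*v) := by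
    rw [Real.cosh_le_cosh, abs_mul, abs_mul]
    exact mul_le_mul_of_nonneg_left h (abs_nonneg σ)
  have h2 : (0:ℝ) < Real.cosh (σ*u) ^ 2 := by positivity
  exact inv_anti₀ h2 (by nlinarith [Real.cosh_pos (σ*u)])

lemma S_bound (σ t : ℝ) : |1 - Real.tanh (σ*t) ^ 2| ≤ 1 := by
  rw [one_sub_tanh_sq]
  rw [abs_of_nonneg (by positivity)]
  rw [inv_le_one_iff₀]
  right
  nlinarith [Real.one_le_cosh (σ*t)]

lemma mono_lemma {σ a b : ℝ} (hσ : 0 < σ) (hb : 0 < b) (hab : b ≤ a) :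
    ∫ t, (1 - Real.tanh (σ*t)^2) * ψ a t ≤ ∫ t, (1 - Real.tanh (σ*t)^2) * ψ b t := by
  set c : ℝ := (a+b)/2 with hc
  have hc0 : 0 < c := by rw [hc]; linarith
  set S : ℝ → ℝ := fun t => 1 - Real.tanh (σ*t)^2 with hS
  set F : ℝ → ℝ := fun t => S t * (ψ b t - ψ a t) with hF
  have hSmeas : Measurable S := by
    have : Continuous S := by
      rw [hS]
      exact continuous_const.sub ((continuous_tanh'.comp (continuous_const.mul continuous_id)).pow 2)
    exact this.measurable
  have iSb : Integrable (fun t => S t * ψ b t) :=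
    (ψ_integrable b).bdd_mul hSmeas.aestronglyMeasurable (Filter.Eventually.of_forall fun t => S_bound σ t)
  have iSa : Integrable (fun t => S t * ψ a t) :=
    (ψ_integrable a).bdd_mul hSmeas.aestronglyMeasurable (Filter.Eventually.of_forall fun t => S_bound σ t)
  have IF : Integrable F := by
    refine (iSb.sub iSa).congr (Filter.Eventually.of_forall fun t => ?_)
    simp only [Pi.sub_apply, hF]
    ring
  have IF2 : Integrable (fun t => F (2*c - t)) := IF.comp_sub_left (2*c)
  have hψab : ∀ t, ψ b (2*c - t) = ψ a t ∧ ψ a (2*c - t) = ψ b t := by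
    intro t
    constructor
    · rw [ψ_def, ψ_def]
      have : (2*c - t - b)^2 = (t - a)^2 := by rw [hc]; ring
      rw [this]
    · rw [ψ_def, ψ_def]
      have : (2*c - t - a)^2 = (t - b)^2 := by rw [hc]; ring
      rw [this]
  have key : ∀ t, 0 ≤ F t + F (2*c - t) := by
    intro t
    have heq : F t + F (2*c - t) = (S t - S (2*c - t)) * (ψ b t - ψ a t) := by
      simp only [hF]
      rw [(hψab t).1, (hψab t).2]
      ring
    rw [heq]
    have hψdiff : ∀ u v : ℝ, (t - u)^2 ≤ (t - v)^2 → ψ v t ≤ ψ u t := by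
      intro u v huv
      rw [ψ_def, ψ_def]
      have : Real.exp (-(t-v)^2/2) ≤ Real.exp (-(t-u)^2/2) := by
        apply Real.exp_le_exp.2; linarith
      have hpos : (0:ℝ) ≤ (Real.sqrt (2*π))⁻¹ := by positivity
      exact mul_le_mul_of_nonneg_left this hpos
    rcases le_total t c with ht | ht
    · apply mul_nonneg
      · have habs : |t| ≤ |2*c - t| := by
          rw [abs_of_nonneg (by linarith : (0:ℝ) ≤ 2*c - t), abs_le]
          constructor <;> linarith
        have := S_mono (σ := σ) habs
        simp only [hS]; linarith
      · have : (t - b)^2 ≤ (t - a)^2 := by nlinarith [hc]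
        have := hψdiff b a this
        linarith
    · have habs : |2*c - t| ≤ |t| := by
        rw [abs_of_nonneg (by linarith : (0:ℝ) ≤ t), abs_le]
        constructor <;> linarith
      have hf1 := S_mono (σ := σ) habs
      have hsq : (t - a)^2 ≤ (t - b)^2 := by nlinarith [hc]
      have hf2 := hψdiff a b hsq
      simp only [hS] at hf1 ⊢
      nlinarith
  have e1 : ∫ t, F (2*c - t) = ∫ t, F t := by
    have h1 : ∫ t, F (2*c - t) = ∫ t, F (2*c + t) := by
      have := integral_neg_eq_self (fun t => F (2*c + t)) (volume : Measure ℝ)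
      simp only [← sub_eq_add_neg] at this
      exact this
    rw [h1]
    exact integral_add_left_eq_self (μ := volume) F (2*c)
  have hsum : 0 ≤ ∫ t, (F t + F (2*c - t)) := integral_nonneg key
  rw [integral_add IF IF2, e1] at hsum
  have hFnn : 0 ≤ ∫ t, F t := by linarith
  have hFsplit : ∫ t, F t = (∫ t, S t * ψ b t) - ∫ t, S t * ψ a t := by
    rw [← integral_sub iSb iSa]
    congr 1 with t
    simp only [hF, Pi.sub_apply]
    ring
  rw [hFsplit] at hFnn
  linarith

lemma compl_int (σ m : ℝ) :
    ∫ t, (1 - Real.tanh (σ*t)^2) * ψ m t = 1 - ∫ t, Real.tanh (σ*t)^2 * ψ m t := by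
  have iT : Integrable (fun t : ℝ => Real.tanh (σ*t)^2 * ψ m t) :=
    (ψ_integrable m).bdd_mul (meas_tanh_sq σ).aestronglyMeasurable (Filter.Eventually.of_forall (tanh_sq_bound σ))
  have heq : (fun t : ℝ => (1 - Real.tanh (σ*t)^2) * ψ m t)
      = fun t => ψ m t - Real.tanh (σ*t)^2 * ψ m t := by
    funext t; ring
  rw [heq, integral_sub (ψ_integrable m) iT, ψ_integral]

end SK12Aux

open SK12Aux

theorem stmt_12 (β h q : ℝ) (hβ : 0 < β) (hh : 0 < h) (hq : q ∈ Set.Ioo (0 : ℝ) 1)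
    (hfix : q = ∫ z, Real.tanh (β * Real.sqrt q * z + h) ^ 2 ∂(gaussianReal 0 1))
    (hB : 1 < β ^ 2 * (1 - q)) :
    h < β ^ 2 * q := by
  obtain ⟨hq0, hq1⟩ := hq
  set σ : ℝ := β * Real.sqrt q with hσdef
  have hσ : 0 < σ := mul_pos hβ (Real.sqrt_pos.2 hq0)
  have hσ2 : σ^2 = β^2 * q := by
    rw [hσdef, mul_pow, Real.sq_sqrt hq0.le]
  by_contra hcon
  push_neg at hcon
  set c : ℝ := h/σ with hcdef
  have hcσ : σ ≤ c := by
    rw [hcdef, le_div_iff₀ hσ]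
    nlinarith [hσ2]
  have hq_int : q = ∫ t, Real.tanh (σ*t)^2 * ψ c t := by
    rw [hfix]
    have h1 : ∫ z, Real.tanh (β * Real.sqrt q * z + h) ^ 2 ∂(gaussianReal 0 1)
        = ∫ z, (fun t => Real.tanh (σ*t)^2) (z + c) ∂(gaussianReal 0 1) := by
      congr 1 with z
      have : β * Real.sqrt q * z + h = σ * (z + c) := by
        rw [hcdef]
        field_simp
        rw [hσdef]
        ring
      rw [this]
    rw [h1, shift_int c _ (meas_tanh_sq σ)]
  have key1 : 1 - q ≤ 1 - ∫ t, Real.tanh (σ*t)^2 * ψ σ t := by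
    rw [← compl_int σ σ]
    have := mono_lemma (σ := σ) (a := c) (b := σ) hσ hσ hcσ
    calc 1 - q = ∫ t, (1 - Real.tanh (σ*t)^2) * ψ c t := by rw [compl_int σ c, ← hq_int]
      _ ≤ _ := this
  have key2 := lowerT hσ
  have hfin : σ^2/(1+σ^2) ≤ q := by linarith
  have h1σ : (0:ℝ) < 1 + σ^2 := by positivity
  rw [div_le_iff₀ h1σ] at hfin
  nlinarith [hσ2, hq0, hq1, hB]
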